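/- Let W ⊆ ℂ be open, let ρ : W → ℝ be continuously differentiable and positive, and let g : W → ℂ be twice continuously differentiable. Suppose that for every twice continuously differentiable complex-valued harmonic function U on W (∂²U/∂w̄∂w = 0), the function u = g · U satisfies ∂/∂w̄ ( (1/ρ(w)) ∂u/∂w ) = 0 on W. Then g satisfies ∂g/∂w = 0 on W (g is antiholomorphic) and (∂/∂w̄ (1/ρ)) · g + (1/ρ) · ∂g/∂w̄ = 0 on W. -/

import Mathlib

open Complex

/-- The Wirtinger derivative `∂/∂w` of a function `f : ℂ → ℂ`. -/
noncomputable def wirtingerD (f : ℂ → ℂ) (z : ℂ) : ℂ :=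
  (1 / 2 : ℂ) * (fderiv ℝ f z 1 - Complex.I * fderiv ℝ f z Complex.I)

/-- The conjugate Wirtinger derivative `∂/∂w̄` of a function `f : ℂ → ℂ`. -/
noncomputable def wirtingerDBar (f : ℂ → ℂ) (z : ℂ) : ℂ :=
  (1 / 2 : ℂ) * (fderiv ℝ f z 1 + Complex.I * fderiv ℝ f z Complex.I)

lemma wD_congr {f h : ℂ → ℂ} {w : ℂ} (hfh : f =ᶠ[nhds w] h) :
    wirtingerD f w = wirtingerD h w := by
  unfold wirtingerD; rw [hfh.fderiv_eq]

lemma wDBar_congr {f h : ℂ → ℂ} {w : ℂ} (hfh : f =ᶠ[nhds w] h) :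
    wirtingerDBar f w = wirtingerDBar h w := by
  unfold wirtingerDBar; rw [hfh.fderiv_eq]

lemma wD_const (c : ℂ) (w : ℂ) : wirtingerD (fun _ => c) w = 0 := by
  simp [wirtingerD, fderiv_const]

lemma wDBar_const (c : ℂ) (w : ℂ) : wirtingerDBar (fun _ => c) w = 0 := by
  simp [wirtingerDBar, fderiv_const]

lemma wD_id (w : ℂ) : wirtingerD (fun x => x) w = 1 := by
  simp [wirtingerD, fderiv_id']
  norm_num [Complex.ext_iff]

lemma wDBar_id (w : ℂ) : wirtingerDBar (fun x => x) w = 0 := by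
  simp [wirtingerDBar, fderiv_id']

lemma wD_conj (w : ℂ) : wirtingerD (fun x => (starRingEnd ℂ) x) w = 0 := by
  have h : (fun x => (starRingEnd ℂ) x) = ⇑Complex.conjCLE := by
    funext x; simp [Complex.conjCLE_apply]
  rw [wirtingerD, h, Complex.conjCLE.fderiv]
  simp [Complex.conjCLE_apply]

lemma wDBar_conj (w : ℂ) : wirtingerDBar (fun x => (starRingEnd ℂ) x) w = 1 := by
  have h : (fun x => (starRingEnd ℂ) x) = ⇑Complex.conjCLE := by
    funext x; simp [Complex.conjCLE_apply]
  rw [wirtingerDBar, h, Complex.conjCLE.fderiv]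
  simp [Complex.conjCLE_apply]; norm_num

lemma wD_mul {f h : ℂ → ℂ} {w : ℂ} (hf : DifferentiableAt ℝ f w)
    (hh : DifferentiableAt ℝ h w) :
    wirtingerD (fun x => f x * h x) w = wirtingerD f w * h w + f w * wirtingerD h w := by
  unfold wirtingerD
  rw [fderiv_fun_mul hf hh]
  simp only [ContinuousLinearMap.add_apply, ContinuousLinearMap.smul_apply, smul_eq_mul]
  ring

lemma wDBar_mul {f h : ℂ → ℂ} {w : ℂ} (hf : DifferentiableAt ℝ f w)
    (hh : DifferentiableAt ℝ h w) :
    wirtingerDBar (fun x => f x * h x) w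
      = wirtingerDBar f w * h w + f w * wirtingerDBar h w := by
  unfold wirtingerDBar
  rw [fderiv_fun_mul hf hh]
  simp only [ContinuousLinearMap.add_apply, ContinuousLinearMap.smul_apply, smul_eq_mul]
  ring

lemma wDBar_add {f h : ℂ → ℂ} {w : ℂ} (hf : DifferentiableAt ℝ f w)
    (hh : DifferentiableAt ℝ h w) :
    wirtingerDBar (fun x => f x + h x) w = wirtingerDBar f w + wirtingerDBar h w := by
  unfold wirtingerDBar
  rw [fderiv_fun_add hf hh]
  simp only [ContinuousLinearMap.add_apply]
  ring
/-- if for every `C²` complex harmonic function `U` on `W` the function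
`u = g · U` satisfies `∂/∂w̄ ((1/ρ) ∂u/∂w) = 0` on `W`, then `g` is antiholomorphic on
`W` and satisfies `(∂/∂w̄ (1/ρ)) g + (1/ρ) ∂g/∂w̄ = 0` there. -/
theorem system_of_weighted_equation (W : Set ℂ) (hW : IsOpen W)
    (ρ : ℂ → ℝ) (hρ : ContDiffOn ℝ 1 ρ W) (hρpos : ∀ w ∈ W, 0 < ρ w)
    (g : ℂ → ℂ) (hg : ContDiffOn ℝ 2 g W)
    (hmain : ∀ U : ℂ → ℂ, ContDiffOn ℝ 2 U W →
      (∀ w ∈ W, wirtingerDBar (fun x => wirtingerD U x) w = 0) →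
      ∀ w ∈ W,
        wirtingerDBar
          (fun x => (1 / (ρ x : ℂ)) * wirtingerD (fun y => g y * U y) x) w = 0) :
    ∀ w ∈ W, wirtingerD g w = 0 ∧
      wirtingerDBar (fun x => (1 / (ρ x : ℂ))) w * g w +
        (1 / (ρ w : ℂ)) * wirtingerDBar g w = 0 := by
  have conj_eq : (fun x => (starRingEnd ℂ) x) = ⇑Complex.conjCLE := by
    funext x; simp [Complex.conjCLE_apply]
  have hcconj : ContDiff ℝ 2 (fun x => (starRingEnd ℂ) x) := by
    rw [conj_eq]
    exact Complex.conjCLE.toContinuousLinearMap.contDiff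
  have hgdiff : ∀ z ∈ W, DifferentiableAt ℝ g z := fun z hz =>
    (hg.contDiffAt (hW.mem_nhds hz)).differentiableAt (by norm_num)
  have hρinv : ∀ z ∈ W, DifferentiableAt ℝ (fun x => (1 / (ρ x : ℂ))) z := by
    intro z hz
    have h1 : DifferentiableAt ℝ (fun x => ((ρ x : ℂ))) z :=
      Complex.ofRealCLM.differentiable.differentiableAt.comp z
        ((hρ.contDiffAt (hW.mem_nhds hz)).differentiableAt (by norm_num))
    have hne : ((ρ z : ℂ)) ≠ 0 := by exact_mod_cast (hρpos z hz).ne'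
    simpa only [one_div] using h1.fun_inv hne
  -- (A): apply the hypothesis with U = 1
  have hA : ∀ z ∈ W, wirtingerDBar (fun x => (1 / (ρ x : ℂ)) * wirtingerD g x) z = 0 := by
    intro z hz
    have h := hmain (fun _ => 1) contDiffOn_const (fun x hx => by
      have he : (fun x => wirtingerD (fun _ : ℂ => (1 : ℂ)) x) = fun _ => (0 : ℂ) := by
        funext y; exact wD_const 1 y
      rw [he]; exact wDBar_const 0 x) z hz
    simpa only [mul_one] using h
  intro w hw
  have hFdiff : DifferentiableAt ℝ (fun x => (1 / (ρ x : ℂ)) * wirtingerD g x) w := by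
    have hDg : ContDiffAt ℝ 1 (fderiv ℝ g) w :=
      (hg.contDiffAt (hW.mem_nhds hw)).fderiv_right (by norm_num)
    have h1 : DifferentiableAt ℝ (fun z => fderiv ℝ g z 1) w :=
      (hDg.differentiableAt (by norm_num)).clm_apply (differentiableAt_const _)
    have hI : DifferentiableAt ℝ (fun z => fderiv ℝ g z Complex.I) w :=
      (hDg.differentiableAt (by norm_num)).clm_apply (differentiableAt_const _)
    exact (hρinv w hw).mul
      ((differentiableAt_const _).mul (h1.sub ((differentiableAt_const _).mul hI)))
  constructor
  · -- U = conj
    have harm : ∀ x ∈ W, wirtingerDBar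
        (fun x => wirtingerD (fun y => (starRingEnd ℂ) y) x) x = 0 := by
      intro x _
      have he : (fun x => wirtingerD (fun y => (starRingEnd ℂ) y) x) = fun _ => (0 : ℂ) := by
        funext y; exact wD_conj y
      rw [he]; exact wDBar_const 0 x
    have hconj := hmain (fun y => (starRingEnd ℂ) y) hcconj.contDiffOn harm w hw
    have hev : (fun x => (1 / (ρ x : ℂ)) * wirtingerD (fun y => g y * (starRingEnd ℂ) y) x)
        =ᶠ[nhds w]
        (fun x => (starRingEnd ℂ) x * ((1 / (ρ x : ℂ)) * wirtingerD g x)) := by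
      filter_upwards [hW.mem_nhds hw] with x hx
      rw [wD_mul (hgdiff x hx) ((hcconj.differentiable (by norm_num)).differentiableAt),
        wD_conj]
      ring
    rw [wDBar_congr hev,
      wDBar_mul ((hcconj.differentiable (by norm_num)).differentiableAt) hFdiff,
      wDBar_conj, hA w hw] at hconj
    have hne : (1 / ((ρ w : ℂ))) ≠ 0 := by
      simp only [ne_eq, one_div, inv_eq_zero]
      exact_mod_cast (hρpos w hw).ne'
    have : (1 / (ρ w : ℂ)) * wirtingerD g w = 0 := by
      have := hconj
      simpa using this
    exact (mul_eq_zero.mp this).resolve_left hne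
  · -- U = id
    have harm : ∀ x ∈ W, wirtingerDBar (fun x => wirtingerD (fun y : ℂ => y) x) x = 0 := by
      intro x _
      have he : (fun x => wirtingerD (fun y : ℂ => y) x) = fun _ => (1 : ℂ) := by
        funext y; exact wD_id y
      rw [he]; exact wDBar_const 1 x
    have hid := hmain (fun y => y) contDiffOn_id harm w hw
    have hev : (fun x => (1 / (ρ x : ℂ)) * wirtingerD (fun y => g y * y) x)
        =ᶠ[nhds w]
        (fun x => x * ((1 / (ρ x : ℂ)) * wirtingerD g x) + (1 / (ρ x : ℂ)) * g x) := by
      filter_upwards [hW.mem_nhds hw] with x hx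
      rw [wD_mul (hgdiff x hx) differentiableAt_fun_id, wD_id]
      ring
    rw [wDBar_congr hev,
      wDBar_add (differentiableAt_fun_id.fun_mul hFdiff) ((hρinv w hw).fun_mul (hgdiff w hw)),
      wDBar_mul differentiableAt_fun_id hFdiff, wDBar_id, hA w hw,
      wDBar_mul (hρinv w hw) (hgdiff w hw)] at hid
    simpa using hid
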